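/- Let A be a finite set with |A| = n, let Σ ∈ ℝ, and let d be a metric on A. Then the function κ: A×A→ℝ defined by κ(x,y) = d(x,·) + d(y,·) − d(x,y) − d(·,·) + Σ/n, where d(x,·) = (1/n)·∑_{y∈A} d(x,y) and d(·,·) = (1/n²)·∑_{y,z∈A} d(y,z), is a Σ-proximity on A. -/

import Mathlib

/-- Let `A` be a finite set with `|A| = n`, let `S ∈ ℝ`, and let `d` be a
metric on `A`.  Then `κ(x,y) = d(x,·) + d(y,·) − d(x,y) − d(·,·) + S/n` is an `S`-proximity
on `A`:  it satisfies the triangle inequality for proximities (with strictness when `z = y`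
and `y ≠ x`) and the normalization condition `∑_y κ(x,y) = S`. -/
theorem distance_to_sigma_proximity {A : Type*} [Fintype A] {n : ℕ} (hn : Fintype.card A = n)
    (S : ℝ) (d : A → A → ℝ)
    (h_nonneg : ∀ x y : A, 0 ≤ d x y)
    (h_symm : ∀ x y : A, d x y = d y x)
    (h_eq_zero : ∀ x y : A, d x y = 0 ↔ x = y)
    (h_tri : ∀ x y z : A, d x z ≤ d x y + d y z)
    (κ : A → A → ℝ)
    (hκ : ∀ x y : A, κ x y =
      (1 / n) * (∑ u : A, d x u) + (1 / n) * (∑ u : A, d y u) - d x y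
        - (1 / (n ^ 2 : ℝ)) * (∑ u : A, ∑ v : A, d u v) + S / n) :
    (∀ x y z : A, κ x y + κ x z - κ y z ≤ κ x x) ∧
    (∀ x y : A, y ≠ x → κ x y + κ x y - κ y y < κ x x) ∧
    (∀ x : A, ∑ y : A, κ x y = S) := by
  refine ⟨?_, ?_, ?_⟩
  · intro x y z
    have h1 := h_tri y x z
    have h2 := h_symm y x
    have hxx : d x x = 0 := (h_eq_zero x x).mpr rfl
    rw [hκ x y, hκ x z, hκ y z, hκ x x]
    linarith
  · intro x y hyx
    have hpos : 0 < d x y := by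
      rcases lt_or_eq_of_le (h_nonneg x y) with h | h
      · exact h
      · exact absurd (((h_eq_zero x y).mp h.symm).symm) hyx
    have hyy : d y y = 0 := (h_eq_zero y y).mpr rfl
    have hxx : d x x = 0 := (h_eq_zero x x).mpr rfl
    rw [hκ x y, hκ y y, hκ x x]
    linarith
  · intro x
    have hA : Nonempty A := ⟨x⟩
    have hn0 : n ≠ 0 := by
      rw [← hn]; exact Fintype.card_ne_zero
    have hnr : (n : ℝ) ≠ 0 := Nat.cast_ne_zero.mpr hn0
    simp only [hκ]
    rw [Finset.sum_add_distrib, Finset.sum_sub_distrib, Finset.sum_sub_distrib,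
      Finset.sum_add_distrib, Finset.sum_const, Finset.sum_const, Finset.sum_const,
      Finset.card_univ, hn, ← Finset.mul_sum]
    field_simp
    have h1 : (n:ℝ)^2 * (n:ℝ)⁻¹ = n := by rw [pow_two, mul_assoc, mul_inv_cancel₀ hnr, mul_one]
    have h2 : (n:ℝ)^2 * (n:ℝ)⁻¹^2 = 1 := by rw [← mul_pow, mul_inv_cancel₀ hnr, one_pow]
    linear_combination (∑ u, d x u + S) * h1 - (∑ i, ∑ u, d i u) * h2
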